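/- (Simes inequality) If all K hypotheses are null and the p-values are PRDS, then for all α ∈ [0,1], P(S_K(P) ≤ α) ≤ α, where S_K(p₁,…,p_K) = min_{k=1,…,K} (K/k)·p_(k). -/

import Mathlib

open MeasureTheory ProbabilityTheory Finset
open scoped ENNReal Classical

noncomputable section

/-- The `i`-th smallest value (0-indexed) among `p 0, …, p (K-1)`. -/
def sortAsc {K : ℕ} (p : Fin K → ℝ) : Fin K → ℝ := p ∘ Tuple.sort p

/-- The `i`-th largest value (0-indexed) among `e 0, …, e (K-1)`. -/
def sortDesc {K : ℕ} (e : Fin K → ℝ) : Fin K → ℝ := e ∘ Tuple.sort (fun j => -e j)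

/-- `k* = max {k : K p_(k) / k ≤ α}` (with `max ∅ = 0`), the BH rejection count. -/
def bhCount (K : ℕ) (α : ℝ) (p : Fin K → ℝ) : ℕ :=
  (univ.filter (fun i : Fin K => (K : ℝ) * sortAsc p i / (i.1 + 1) ≤ α)).sup
    (fun i => i.1 + 1)

/-- The BH procedure rejects the hypotheses carrying the `k*` smallest p-values. -/
def bhRejects (K : ℕ) (α : ℝ) (p : Fin K → ℝ) : Finset (Fin K) :=
  univ.filter (fun k => ∃ i : Fin K, i.1 + 1 ≤ bhCount K α p ∧ p k ≤ sortAsc p i)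

/-- `k* = max {k : k e_[k] / K ≥ 1/α}`, the e-BH rejection count. -/
def ebhCount (K : ℕ) (α : ℝ) (e : Fin K → ℝ) : ℕ :=
  (univ.filter (fun i : Fin K => 1 / α ≤ (i.1 + 1) * sortDesc e i / K)).sup
    (fun i => i.1 + 1)

/-- The e-BH procedure rejects the hypotheses carrying the `k*` largest e-values. -/
def ebhRejects (K : ℕ) (α : ℝ) (e : Fin K → ℝ) : Finset (Fin K) :=
  univ.filter (fun k => ∃ i : Fin K, i.1 + 1 ≤ ebhCount K α e ∧ sortDesc e i ≤ e k)

/-- Simes function `S_K(p) = min_k (K/k) p_(k)`. -/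
def simes (K : ℕ) (p : Fin K → ℝ) : ℝ := ⨅ i : Fin K, (K : ℝ) / (i.1 + 1) * sortAsc p i

/-- Harmonic number `ℓ_K = ∑_{k=1}^K 1/k`. -/
def harm (K : ℕ) : ℝ := ∑ k ∈ Finset.Icc 1 K, (1 : ℝ) / k

/-- An increasing (upper) subset of `ℝ^K`. -/
def IncreasingSet {K : ℕ} (A : Set (Fin K → ℝ)) : Prop := ∀ x ∈ A, ∀ y, x ≤ y → y ∈ A

/-- Positive regression dependence on the subset `N` of nulls. -/
def PRDS {Ω : Type*} [MeasurableSpace Ω] (μ : Measure Ω) {K : ℕ}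
    (P : Fin K → Ω → ℝ) (N : Finset (Fin K)) : Prop :=
  ∀ k ∈ N, ∀ A : Set (Fin K → ℝ), MeasurableSet A → IncreasingSet A →
    Monotone (fun x : ℝ => μ[|{ω | P k ω ≤ x}] {ω | (fun j => P j ω) ∈ A})

/-- False discovery proportion of a rejection set `D` w.r.t. the null set `N`. -/
def fdp {K : ℕ} (D N : Finset (Fin K)) : ℝ := ((D ∩ N).card : ℝ) / (max D.card 1 : ℕ)

end

lemma sortAsc_le_iff {K : ℕ} (p : Fin K → ℝ) (i : Fin K) (c : ℝ) :
    sortAsc p i ≤ c ↔ i.1 < (univ.filter (fun k => p k ≤ c)).card := by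
  constructor
  · intro h
    have hinj : Function.Injective (Tuple.sort p) := (Tuple.sort p).injective
    have hsub : (Finset.Iic i).image (Tuple.sort p) ⊆ univ.filter (fun k => p k ≤ c) := by
      intro k hk
      simp only [Finset.mem_image, Finset.mem_Iic] at hk
      obtain ⟨j, hj, rfl⟩ := hk
      simp only [Finset.mem_filter, Finset.mem_univ, true_and]
      exact le_trans (Tuple.monotone_sort p hj) h
    calc i.1 < i.1 + 1 := Nat.lt_succ_self _
    _ = ((Finset.Iic i).image (Tuple.sort p)).card := by
        rw [Finset.card_image_of_injective _ hinj, Fin.card_Iic]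
    _ ≤ _ := Finset.card_le_card hsub
  · intro h
    by_contra hc
    push_neg at hc
    have hcard : (univ.filter (fun k => p k ≤ c)).card
        = (univ.filter (fun j : Fin K => sortAsc p j ≤ c)).card := by
      apply Finset.card_bij (fun k _ => (Tuple.sort p).symm k)
      · intro k hk
        simp only [Finset.mem_filter, Finset.mem_univ, true_and] at hk ⊢
        simpa [sortAsc] using hk
      · intro a ha b hb hab
        exact (Tuple.sort p).symm.injective hab
      · intro j hj
        refine ⟨Tuple.sort p j, ?_, by simp⟩
        simp only [Finset.mem_filter, Finset.mem_univ, true_and] at hj ⊢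
        simpa [sortAsc] using hj
    have hsub : (univ.filter (fun j : Fin K => sortAsc p j ≤ c)) ⊆ Finset.Iio i := by
      intro j hj
      simp only [Finset.mem_filter, Finset.mem_univ, true_and] at hj
      simp only [Finset.mem_Iio]
      by_contra hij
      push_neg at hij
      exact absurd (le_trans (Tuple.monotone_sort p hij) hj) (not_le.2 hc)
    have := Finset.card_le_card hsub
    rw [Fin.card_Iio] at this
    omega

lemma sortAsc_mono {K : ℕ} {p p' : Fin K → ℝ} (h : p ≤ p') (i : Fin K) :
    sortAsc p i ≤ sortAsc p' i := by
  rw [sortAsc_le_iff]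
  refine lt_of_lt_of_le ((sortAsc_le_iff p' i _).1 le_rfl) (Finset.card_le_card ?_)
  intro k hk
  simp only [Finset.mem_filter, Finset.mem_univ, true_and] at hk ⊢
  exact le_trans (h k) hk

lemma measurableSet_sortAsc_le {K : ℕ} (i : Fin K) (c : ℝ) :
    MeasurableSet {x : Fin K → ℝ | sortAsc x i ≤ c} := by
  have : {x : Fin K → ℝ | sortAsc x i ≤ c}
      = ⋃ S : Finset (Fin K), ⋃ _ : i.1 < S.card, ⋂ k ∈ S, {x : Fin K → ℝ | x k ≤ c} := by
    ext x
    simp only [Set.mem_setOf_eq, Set.mem_iUnion, Set.mem_iInter, sortAsc_le_iff]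
    constructor
    · intro h
      exact ⟨univ.filter (fun k => x k ≤ c), h, fun k hk => (Finset.mem_filter.1 hk).2⟩
    · rintro ⟨S, hS, hmem⟩
      refine lt_of_lt_of_le hS (Finset.card_le_card ?_)
      intro k hk
      simp only [Finset.mem_filter, Finset.mem_univ, true_and]
      exact hmem k hk
  rw [this]
  exact MeasurableSet.iUnion fun S => MeasurableSet.iUnion fun _ =>
    MeasurableSet.biInter (Set.to_countable _) fun k _ =>
      measurableSet_le (measurable_pi_apply k) measurable_const

lemma bh_cond_iff {K : ℕ} (hK : 0 < K) (α : ℝ) (p : Fin K → ℝ) (i : Fin K) :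
    (K : ℝ) * sortAsc p i / (i.1 + 1) ≤ α ↔ sortAsc p i ≤ α * (i.1 + 1) / K := by
  have h1 : (0:ℝ) < (i.1 : ℝ) + 1 := by positivity
  have h2 : (0:ℝ) < (K:ℝ) := by exact_mod_cast hK
  rw [div_le_iff₀ h1, le_div_iff₀ h2]
  constructor <;> intro h <;> nlinarith

lemma bhCount_le {K : ℕ} (α : ℝ) (p : Fin K → ℝ) : bhCount K α p ≤ K :=
  Finset.sup_le fun i _ => i.2

lemma le_bhCount_iff {K : ℕ} (hK : 0 < K) {r : ℕ} (hr : 1 ≤ r) (α : ℝ) (p : Fin K → ℝ) :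
    r ≤ bhCount K α p ↔ ∃ i : Fin K, r ≤ i.1 + 1 ∧ sortAsc p i ≤ α * (i.1 + 1) / K := by
  rw [bhCount, Finset.le_sup_iff (show (⊥:ℕ) < r by simp only [Nat.bot_eq_zero]; omega)]
  constructor
  · rintro ⟨i, hi, hri⟩
    exact ⟨i, hri, (bh_cond_iff hK α p i).1 (Finset.mem_filter.1 hi).2⟩
  · rintro ⟨i, hri, hi⟩
    exact ⟨i, Finset.mem_filter.2 ⟨Finset.mem_univ _, (bh_cond_iff hK α p i).2 hi⟩, hri⟩

lemma bhCount_antitone {K : ℕ} (α : ℝ) {p p' : Fin K → ℝ} (h : p ≤ p') :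
    bhCount K α p' ≤ bhCount K α p := by
  apply Finset.sup_mono
  intro i hi
  simp only [Finset.mem_filter, Finset.mem_univ, true_and] at hi ⊢
  have h1 : (0:ℝ) < (i.1 : ℝ) + 1 := by positivity
  have := sortAsc_mono h i
  refine le_trans ?_ hi
  gcongr

lemma measurableSet_le_bhCount {K : ℕ} (hK : 0 < K) {r : ℕ} (hr : 1 ≤ r) (α : ℝ) :
    MeasurableSet {x : Fin K → ℝ | r ≤ bhCount K α x} := by
  have : {x : Fin K → ℝ | r ≤ bhCount K α x}
      = ⋃ i : Fin K, ⋃ _ : r ≤ i.1 + 1, {x : Fin K → ℝ | sortAsc x i ≤ α * (i.1 + 1) / K} := by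
    ext x
    simp only [Set.mem_setOf_eq, Set.mem_iUnion, le_bhCount_iff hK hr]
    constructor
    · rintro ⟨i, h1, h2⟩; exact ⟨i, h1, h2⟩
    · rintro ⟨i, h1, h2⟩; exact ⟨i, h1, h2⟩
  rw [this]
  exact MeasurableSet.iUnion fun i => MeasurableSet.iUnion fun _ =>
    measurableSet_sortAsc_le i _

lemma simes_le_iff {K : ℕ} (hK : 0 < K) (α : ℝ) (p : Fin K → ℝ) :
    simes K p ≤ α ↔ 1 ≤ bhCount K α p := by
  have hne : Nonempty (Fin K) := ⟨⟨0, hK⟩⟩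
  have hbdd : BddBelow (Set.range fun i : Fin K => (K : ℝ) / (i.1 + 1) * sortAsc p i) :=
    Set.Finite.bddBelow (Set.finite_range _)
  have hdm : ∀ i : Fin K, (K : ℝ) / (i.1 + 1) * sortAsc p i
      = (K : ℝ) * sortAsc p i / (i.1 + 1) := fun i => by ring
  constructor
  · intro h
    obtain ⟨i, hi⟩ := Finite.exists_min (fun i : Fin K => (K : ℝ) / (i.1 + 1) * sortAsc p i)
    have heq : simes K p = (K : ℝ) / (i.1 + 1) * sortAsc p i :=
      le_antisymm (ciInf_le hbdd i) (le_ciInf hi)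
    have : (K : ℝ) * sortAsc p i / (i.1 + 1) ≤ α := by rw [← hdm]; rw [← heq]; exact h
    calc (1:ℕ) ≤ i.1 + 1 := by omega
    _ ≤ bhCount K α p :=
      Finset.le_sup (f := fun i : Fin K => i.1+1) (Finset.mem_filter.2 ⟨Finset.mem_univ _, this⟩)
  · intro h
    obtain ⟨i, hri, hi⟩ := (le_bhCount_iff hK le_rfl α p).1 h
    refine le_trans (ciInf_le hbdd i) ?_
    rw [hdm]
    exact (bh_cond_iff hK α p i).2 hi

lemma bhCount_card {K : ℕ} (hK : 0 < K) {α : ℝ} {p : Fin K → ℝ} {r : ℕ} (hr : 1 ≤ r)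
    (h : bhCount K α p = r) :
    r ≤ (univ.filter (fun k => p k ≤ α * r / K)).card := by
  obtain ⟨i, hri, hi⟩ := (le_bhCount_iff hK hr α p).1 h.ge
  have hir : i.1 + 1 ≤ r := by
    rw [← h]
    exact Finset.le_sup (f := fun i : Fin K => i.1+1) (Finset.mem_filter.2 ⟨Finset.mem_univ _, (bh_cond_iff hK α p i).2 hi⟩)
  have : i.1 + 1 = r := le_antisymm hir hri
  have hq : sortAsc p i ≤ α * r / K := by rw [← this]; exact_mod_cast hi
  have := (sortAsc_le_iff p i _).1 hq
  omega

lemma telescope_bound (K : ℕ) (hK : 0 < K) (α : ℝ) (hα : 0 ≤ α)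
    (b d c : ℕ → ℝ)
    (hb1 : ∀ r, b r ≤ 1)
    (hd0 : ∀ r, 0 ≤ d r) (hdb : ∀ r, d r ≤ b r)
    (hc0 : ∀ r, 0 ≤ c r)
    (hcq : ∀ r ∈ Finset.Icc 1 K, c r ≤ α * r / K)
    (hmono : ∀ r s, 1 ≤ r → r ≤ s → s ≤ K → c r ≤ c s)
    (hprds : ∀ r ∈ Finset.Icc 1 K, 0 < c r → b (r + 1) ≤ d r) :
    ∑ r ∈ Finset.Icc 1 K, (1 / r : ℝ) * (c r * (b r - d r)) ≤ α / K := by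
  have hKpos : (0:ℝ) < K := by exact_mod_cast hK
  by_cases hall : ∀ r ∈ Finset.Icc 1 K, c r = 0
  · have : ∑ r ∈ Finset.Icc 1 K, (1 / r : ℝ) * (c r * (b r - d r)) = 0 := by
      apply Finset.sum_eq_zero
      intro r hr; rw [hall r hr]; ring
    rw [this]; positivity
  · push_neg at hall
    obtain ⟨t₀, ht₀m, ht₀⟩ := hall
    set T := (Finset.Icc 1 K).filter (fun r => 0 < c r) with hT
    have hTne : T.Nonempty :=
      ⟨t₀, Finset.mem_filter.2 ⟨ht₀m, lt_of_le_of_ne (hc0 t₀) (Ne.symm ht₀)⟩⟩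
    set t := T.min' hTne with htdef
    have htT : t ∈ T := Finset.min'_mem _ _
    have htm : t ∈ Finset.Icc 1 K := (Finset.mem_filter.1 htT).1
    have ht1 : 1 ≤ t := (Finset.mem_Icc.1 htm).1
    have htK : t ≤ K := (Finset.mem_Icc.1 htm).2
    have htc : 0 < c t := (Finset.mem_filter.1 htT).2
    have hzero : ∀ r ∈ Finset.Icc 1 K, r < t → c r = 0 := by
      intro r hr hrt
      by_contra h
      have : r ∈ T := Finset.mem_filter.2 ⟨hr, lt_of_le_of_ne (hc0 r) (Ne.symm h)⟩
      exact absurd (Finset.min'_le _ _ this) (by omega)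
    have hpos : ∀ r, t ≤ r → r ≤ K → 0 < c r := fun r h1 h2 =>
      lt_of_lt_of_le htc (hmono t r ht1 h1 h2)
    have hsplit : ∑ r ∈ Finset.Icc 1 K, (1 / r : ℝ) * (c r * (b r - d r))
        = ∑ r ∈ Finset.Icc t K, (1 / r : ℝ) * (c r * (b r - d r)) := by
      symm
      apply Finset.sum_subset
      · intro r hr
        simp only [Finset.mem_Icc] at hr ⊢
        omega
      · intro r hr hr'
        simp only [Finset.mem_Icc] at hr hr'
        have : c r = 0 := hzero r (Finset.mem_Icc.2 hr) (by omega)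
        rw [this]; ring
    rw [hsplit]
    have hstep : ∀ r ∈ Finset.Icc t K,
        (1 / r : ℝ) * (c r * (b r - d r)) ≤ (α / K) * (b r - b (r + 1)) := by
      intro r hr
      simp only [Finset.mem_Icc] at hr
      have hr1 : 1 ≤ r := le_trans ht1 hr.1
      have hrm : r ∈ Finset.Icc 1 K := Finset.mem_Icc.2 ⟨hr1, hr.2⟩
      have hcr : 0 < c r := hpos r hr.1 hr.2
      have hbd : b (r + 1) ≤ d r := hprds r hrm hcr
      have hrpos : (0:ℝ) < r := by exact_mod_cast hr1
      have h1 : (1 / r : ℝ) * c r ≤ α / K := by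
        rw [div_mul_eq_mul_div, one_mul, div_le_div_iff₀ hrpos hKpos]
        have h2 := hcq r hrm
        rw [le_div_iff₀ hKpos] at h2
        nlinarith
      calc (1 / r : ℝ) * (c r * (b r - d r)) = ((1 / r) * c r) * (b r - d r) := by ring
      _ ≤ (α / K) * (b r - d r) := by
          apply mul_le_mul_of_nonneg_right h1
          linarith [hdb r]
      _ ≤ (α / K) * (b r - b (r + 1)) := by
          apply mul_le_mul_of_nonneg_left (by linarith) (by positivity)
    calc ∑ r ∈ Finset.Icc t K, (1 / r : ℝ) * (c r * (b r - d r))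
        ≤ ∑ r ∈ Finset.Icc t K, (α / K) * (b r - b (r + 1)) := Finset.sum_le_sum hstep
    _ = (α / K) * ∑ r ∈ Finset.Icc t K, (b r - b (r + 1)) := by rw [Finset.mul_sum]
    _ = (α / K) * (b t - b (K + 1)) := by
        congr 1
        rw [← Finset.Ico_add_one_right_eq_Icc, Finset.sum_Ico_eq_sum_range]
        have h1 := Finset.sum_range_sub' (fun i => b (t + i)) (K + 1 - t)
        simp only [Nat.add_zero] at h1 ⊢
        rw [show t + (K + 1 - t) = K + 1 by omega] at h1
        rw [← h1]
        apply Finset.sum_congr rfl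
        intro i _
        rw [Nat.add_assoc]
    _ ≤ (α / K) * 1 := by
        apply mul_le_mul_of_nonneg_left ?_ (by positivity)
        have h0 : 0 ≤ b (K+1) := le_trans (hd0 _) (hdb _)
        linarith [hb1 t]
    _ = α / K := mul_one _

lemma cond_le_one {Ω : Type*} [MeasurableSpace Ω] (μ : Measure Ω) [IsProbabilityMeasure μ]
    {s : Set Ω} (hs : MeasurableSet s) (t : Set Ω) : μ[|s] t ≤ 1 := by
  rw [cond_apply hs]
  rcases eq_or_ne (μ s) 0 with h0 | h0
  · have : μ (s ∩ t) = 0 := le_antisymm (h0 ▸ measure_mono Set.inter_subset_left) zero_le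
    simp [this]
  · calc (μ s)⁻¹ * μ (s ∩ t) ≤ (μ s)⁻¹ * μ s :=
        mul_le_mul_right (measure_mono Set.inter_subset_left) _
    _ = 1 := ENNReal.inv_mul_cancel h0 (measure_ne_top μ s)

lemma count_bound {Ω : Type*} [MeasurableSpace Ω] (μ : Measure Ω)
    {K : ℕ} (hK : 0 < K) (P : Fin K → Ω → ℝ) (hP : ∀ k, Measurable (P k)) (α : ℝ)
    {r : ℕ} (hr1 : 1 ≤ r) {D : Set Ω} (hDm : MeasurableSet D)
    (hD : ∀ ω ∈ D, bhCount K α (fun j => P j ω) = r) :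
    (r : ℝ≥0∞) * μ D ≤ ∑ k : Fin K, μ ({ω | P k ω ≤ α * r / K} ∩ D) := by
  have hCm : ∀ k : Fin K, MeasurableSet {ω | P k ω ≤ α * r / K} :=
    fun k => measurableSet_le (hP k) measurable_const
  have step1 : ∀ k : Fin K, μ ({ω | P k ω ≤ α * r / K} ∩ D)
      = ∫⁻ ω in D, ({ω | P k ω ≤ α * r / K}).indicator (fun _ => (1:ℝ≥0∞)) ω ∂μ := by
    intro k
    rw [lintegral_indicator (hCm k), Measure.restrict_restrict (hCm k),
      setLIntegral_one]
  rw [Finset.sum_congr rfl (fun k _ => step1 k), ← lintegral_finset_sum]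
  · have : (r : ℝ≥0∞) * μ D = ∫⁻ _ in D, (r : ℝ≥0∞) ∂μ := by
      rw [setLIntegral_const, mul_comm]
    rw [this]
    apply setLIntegral_mono
      (Finset.measurable_sum univ fun k _ => measurable_one.indicator (hCm k)) ?_
    · intro ω hω
      have hcard := bhCount_card hK hr1 (hD ω hω)
      have : ∑ k : Fin K, ({ω | P k ω ≤ α * r / K}).indicator (fun _ => (1:ℝ≥0∞)) ω
          = ((univ.filter (fun k : Fin K => P k ω ≤ α * r / K)).card : ℝ≥0∞) := by
        rw [Finset.card_filter]
        push_cast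
        apply Finset.sum_congr rfl
        intro k _
        simp [Set.indicator_apply, Set.mem_setOf_eq]
      exact le_trans (by exact_mod_cast Nat.cast_le.2 hcard) (le_of_eq this.symm)
  · exact fun k _ => (measurable_one.indicator (hCm k))

lemma per_k_bound {Ω : Type*} [MeasurableSpace Ω] (μ : Measure Ω) [IsProbabilityMeasure μ]
    {K : ℕ} (hK : 0 < K) (P : Fin K → Ω → ℝ) (hP : ∀ k, Measurable (P k))
    (h_pvar : ∀ k, ∀ x ∈ Set.Ioo (0:ℝ) 1, μ {ω | P k ω ≤ x} ≤ ENNReal.ofReal x)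
    (h_prds : PRDS μ P Finset.univ)
    {α : ℝ} (hα0 : 0 < α) (hα1 : α < 1) (k : Fin K) :
    ∑ r ∈ Finset.Icc 1 K, (1 / r : ℝ) *
      (μ ({ω | P k ω ≤ α * r / K} ∩ {ω | bhCount K α (fun j => P j ω) = r})).toReal
      ≤ α / K := by
  have hKR : (0:ℝ) < K := by exact_mod_cast hK
  set C : ℕ → Set Ω := fun r => {ω | P k ω ≤ α * r / K} with hCdef
  set E : ℕ → Set Ω := fun r => {ω | r ≤ bhCount K α (fun j => P j ω)} with hEdef
  set D : ℕ → Set Ω := fun r => {ω | bhCount K α (fun j => P j ω) = r} with hDdef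
  have hCm : ∀ r, MeasurableSet (C r) := fun r => measurableSet_le (hP k) measurable_const
  have hXm : Measurable (fun ω => (fun j => P j ω)) := measurable_pi_lambda _ hP
  have hEm : ∀ r, 1 ≤ r → MeasurableSet (E r) := fun r hr =>
    hXm (measurableSet_le_bhCount hK hr α)
  have hCsub : ∀ r s, r ≤ s → C r ⊆ C s := by
    intro r s hrs ω hω
    simp only [hCdef, Set.mem_setOf_eq] at hω ⊢
    have : (r:ℝ) ≤ (s:ℝ) := by exact_mod_cast hrs
    refine le_trans hω ?_
    gcongr
  have hEsub : ∀ r s, r ≤ s → E s ⊆ E r := by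
    intro r s hrs ω hω
    simp only [hEdef, Set.mem_setOf_eq] at hω ⊢
    omega
  have hEK : E (K + 1) = ∅ := by
    ext ω
    simp only [hEdef, Set.mem_setOf_eq, Set.mem_empty_iff_false, iff_false, not_le]
    exact lt_of_le_of_lt (bhCount_le α _) (by omega)
  -- the real-valued quantities
  set c : ℕ → ℝ := fun r => (μ (C r)).toReal with hcdef
  set b : ℕ → ℝ := fun r => ((μ[|C r]) (E r)).toReal with hbdef
  set d : ℕ → ℝ := fun r => ((μ[|C r]) (E (r+1))).toReal with hddef
  have hcond1 : ∀ r t, (μ[|C r]) t ≤ 1 := fun r t => cond_le_one μ (hCm r) t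
  have hb1 : ∀ r, b r ≤ 1 := by
    intro r
    rw [hbdef]
    exact ENNReal.toReal_le_of_le_ofReal one_pos.le (by simpa using hcond1 r (E r))
  have hd0 : ∀ r, 0 ≤ d r := fun r => ENNReal.toReal_nonneg
  have hdb : ∀ r, d r ≤ b r := by
    intro r
    apply (ENNReal.toReal_le_toReal ?_ ?_).mpr
    · exact measure_mono (hEsub r (r+1) (by omega))
    · exact ne_top_of_le_ne_top ENNReal.one_ne_top (hcond1 r _)
    · exact ne_top_of_le_ne_top ENNReal.one_ne_top (hcond1 r _)
  have hc0 : ∀ r, 0 ≤ c r := fun r => ENNReal.toReal_nonneg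
  have hq01 : ∀ r, 1 ≤ r → r ≤ K → α * r / K ∈ Set.Ioo (0:ℝ) 1 := by
    intro r h1 h2
    constructor
    · have : (0:ℝ) < (r:ℝ) := by exact_mod_cast h1
      positivity
    · have h2' : (r:ℝ) ≤ (K:ℝ) := by exact_mod_cast h2
      rw [div_lt_one hKR]
      nlinarith
  have hcq : ∀ r ∈ Finset.Icc 1 K, c r ≤ α * r / K := by
    intro r hr
    rw [Finset.mem_Icc] at hr
    have := h_pvar k _ (hq01 r hr.1 hr.2)
    exact ENNReal.toReal_le_of_le_ofReal (le_of_lt (hq01 r hr.1 hr.2).1) this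
  have hmono : ∀ r s, 1 ≤ r → r ≤ s → s ≤ K → c r ≤ c s := by
    intro r s h1 h2 h3
    exact (ENNReal.toReal_le_toReal (measure_ne_top μ _) (measure_ne_top μ _)).mpr
      (measure_mono (hCsub r s h2))
  have hprds' : ∀ r ∈ Finset.Icc 1 K, 0 < c r → b (r + 1) ≤ d r := by
    intro r hr hcr
    rw [Finset.mem_Icc] at hr
    have hne0 : μ (C r) ≠ 0 := by
      intro h0
      rw [hcdef] at hcr
      simp only [h0, ENNReal.toReal_zero] at hcr
      exact lt_irrefl _ hcr
    have hne0' : μ (C (r+1)) ≠ 0 := fun h0 =>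
      hne0 (le_antisymm (h0 ▸ measure_mono (hCsub r (r+1) (by omega))) zero_le)
    haveI i1 : IsProbabilityMeasure (μ[|C r]) := cond_isProbabilityMeasure hne0
    haveI i2 : IsProbabilityMeasure (μ[|C (r+1)]) := cond_isProbabilityMeasure hne0'
    set A : Set (Fin K → ℝ) := {x | ¬ (r + 1 ≤ bhCount K α x)} with hA
    have hAm : MeasurableSet A := (measurableSet_le_bhCount hK (by omega) α).compl
    have hAinc : IncreasingSet A := by
      intro x hx y hxy
      simp only [hA, Set.mem_setOf_eq] at hx ⊢
      intro hy
      exact hx (le_trans hy (bhCount_antitone α hxy))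
    have hmon := h_prds k (Finset.mem_univ k) A hAm hAinc
    have hle : α * r / K ≤ α * ((r:ℕ)+1 : ℕ) / K := by
      have h1 : ((r:ℕ):ℝ) ≤ (((r+1):ℕ):ℝ) := by exact_mod_cast Nat.le_succ r
      gcongr
    have key : (μ[|C r]) {ω | (fun j => P j ω) ∈ A} ≤ (μ[|C (r+1)]) {ω | (fun j => P j ω) ∈ A} :=
      hmon hle
    have hset : {ω | (fun j => P j ω) ∈ A} = (E (r+1))ᶜ := by
      ext ω
      simp [hA, hEdef, Set.mem_compl_iff]
    rw [hset] at key
    have hEr1 : MeasurableSet (E (r+1)) := hEm (r+1) (by omega)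
    have key2 : (μ[|C (r+1)]) (E (r+1)) ≤ (μ[|C r]) (E (r+1)) := by
      have h1 : (μ[|C r]) (E (r+1)) = 1 - (μ[|C r]) (E (r+1))ᶜ := by
        rw [← prob_compl_eq_one_sub hEr1.compl, compl_compl]
      have h2 : (μ[|C (r+1)]) (E (r+1)) = 1 - (μ[|C (r+1)]) (E (r+1))ᶜ := by
        rw [← prob_compl_eq_one_sub hEr1.compl, compl_compl]
      rw [h1, h2]
      exact tsub_le_tsub_left key 1
    exact (ENNReal.toReal_le_toReal
      (ne_top_of_le_ne_top ENNReal.one_ne_top (hcond1 _ _))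
      (ne_top_of_le_ne_top ENNReal.one_ne_top (hcond1 _ _))).mpr key2
  have hterm : ∀ r ∈ Finset.Icc 1 K, (μ (C r ∩ D r)).toReal = c r * (b r - d r) := by
    intro r hr
    rw [Finset.mem_Icc] at hr
    rcases eq_or_ne (μ (C r)) 0 with h0 | h0
    · have hz : μ (C r ∩ D r) = 0 :=
        le_antisymm (h0 ▸ measure_mono Set.inter_subset_left) zero_le
      have hcz : c r = 0 := by rw [hcdef]; simp [h0]
      rw [hz, hcz]
      simp
    · have hfin : μ (C r) ≠ ⊤ := measure_ne_top μ (C r)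
      have hEr : MeasurableSet (E r) := hEm r (by omega)
      have hEr1 : MeasurableSet (E (r+1)) := hEm (r+1) (by omega)
      have hsplit : μ (C r ∩ E r) = μ (C r ∩ D r) + μ (C r ∩ E (r+1)) := by
        rw [← measure_union ?_ ((hCm r).inter hEr1)]
        · congr 1
          ext ω
          simp only [hCdef, hDdef, hEdef, Set.mem_union, Set.mem_inter_iff, Set.mem_setOf_eq]
          constructor
          · rintro ⟨h1, h2⟩
            rcases eq_or_lt_of_le h2 with h | h
            · exact Or.inl ⟨h1, h.symm⟩
            · exact Or.inr ⟨h1, h⟩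
          · rintro (⟨h1, h2⟩ | ⟨h1, h2⟩)
            · exact ⟨h1, h2.ge⟩
            · exact ⟨h1, by omega⟩
        · rw [Set.disjoint_left]
          rintro ω ⟨h1, h2⟩ ⟨h3, h4⟩
          simp only [hDdef, hEdef, Set.mem_setOf_eq] at h2 h4
          omega
      have hb' : (μ[|C r]) (E r) * μ (C r) = μ (C r ∩ E r) := by
        rw [cond_apply (hCm r), mul_comm, ← mul_assoc, ENNReal.mul_inv_cancel h0 hfin, one_mul]
      have hd' : (μ[|C r]) (E (r+1)) * μ (C r) = μ (C r ∩ E (r+1)) := by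
        rw [cond_apply (hCm r), mul_comm, ← mul_assoc, ENNReal.mul_inv_cancel h0 hfin, one_mul]
      have t1 : c r * b r = (μ (C r ∩ E r)).toReal := by
        rw [hcdef, hbdef, ← ENNReal.toReal_mul, mul_comm, hb']
      have t2 : c r * d r = (μ (C r ∩ E (r+1))).toReal := by
        rw [hcdef, hddef, ← ENNReal.toReal_mul, mul_comm, hd']
      have t3 : (μ (C r ∩ E r)).toReal
          = (μ (C r ∩ D r)).toReal + (μ (C r ∩ E (r+1))).toReal := by
        rw [hsplit, ENNReal.toReal_add (measure_ne_top μ _) (measure_ne_top μ _)]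
      rw [mul_sub]
      rw [t1, t2]
      linarith
  have := telescope_bound K hK α hα0.le b d c hb1 hd0 hdb hc0 hcq hmono hprds'
  refine le_trans (le_of_eq ?_) this
  apply Finset.sum_congr rfl
  intro r hr
  rw [hterm r hr]


/-- **Simes inequality.** If all `K` hypotheses are null and the p-values are PRDS, then
`P(S_K(P) ≤ α) ≤ α` for all `α ∈ [0,1]`. -/
theorem simes_inequality_prds
    {Ω : Type*} [MeasurableSpace Ω] (μ : Measure Ω) [IsProbabilityMeasure μ]
    {K : ℕ} (hK : 0 < K)
    (P : Fin K → Ω → ℝ) (hP : ∀ k, Measurable (P k))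
    (h_pvar : ∀ k, ∀ x ∈ Set.Ioo (0 : ℝ) 1, μ {ω | P k ω ≤ x} ≤ ENNReal.ofReal x)
    (h_prds : PRDS μ P Finset.univ) :
    ∀ α ∈ Set.Icc (0 : ℝ) 1,
      μ {ω | simes K (fun j => P j ω) ≤ α} ≤ ENNReal.ofReal α := by
  rintro α ⟨hα0, hα1⟩
  rcases eq_or_lt_of_le hα1 with h1 | h1
  · rw [h1]
    calc μ _ ≤ 1 := prob_le_one
    _ = ENNReal.ofReal 1 := by simp
  rcases eq_or_lt_of_le hα0 with h0 | h0
  · -- α = 0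
    have hP0 : ∀ k : Fin K, μ {ω | P k ω ≤ (0:ℝ)} = 0 := by
      intro k
      by_contra hne
      have hfin : μ {ω | P k ω ≤ (0:ℝ)} ≠ ⊤ := measure_ne_top μ _
      have hpos : 0 < (μ {ω | P k ω ≤ (0:ℝ)}).toReal :=
        ENNReal.toReal_pos hne hfin
      set m := (μ {ω | P k ω ≤ (0:ℝ)}).toReal with hm
      set x := min m 1 / 2 with hx
      have hx0 : 0 < x := by
        rw [hx]
        have : 0 < min m 1 := lt_min hpos one_pos
        linarith
      have hx1 : x < 1 := by
        rw [hx]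
        have : min m 1 ≤ 1 := min_le_right _ _
        linarith
      have hxm : x < m := by
        rw [hx]
        rcases le_total m 1 with h | h
        · rw [min_eq_left h]; linarith
        · rw [min_eq_right h]; linarith
      have hsub : {ω | P k ω ≤ (0:ℝ)} ⊆ {ω | P k ω ≤ x} := by
        intro ω hω
        exact le_trans hω hx0.le
      have := le_trans (measure_mono hsub) (h_pvar k x ⟨hx0, hx1⟩)
      have := ENNReal.toReal_mono ENNReal.ofReal_ne_top this
      rw [ENNReal.toReal_ofReal hx0.le] at this
      rw [← hm] at this
      linarith
    have hsub : {ω | simes K (fun j => P j ω) ≤ α} ⊆ ⋃ k : Fin K, {ω | P k ω ≤ (0:ℝ)} := by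
      intro ω hω
      simp only [Set.mem_setOf_eq] at hω
      rw [← h0] at hω
      rw [simes_le_iff hK 0 _] at hω
      obtain ⟨i, _, hi⟩ := (le_bhCount_iff hK le_rfl 0 _).1 hω
      have hi0 : sortAsc (fun j => P j ω) i ≤ 0 := by
        simpa using hi
      have := (sortAsc_le_iff _ i 0).1 hi0
      have hne : (univ.filter (fun j : Fin K => P j ω ≤ (0:ℝ))).Nonempty :=
        Finset.card_pos.1 (by omega)
      obtain ⟨j, hj⟩ := hne
      simp only [Finset.mem_filter] at hj
      exact Set.mem_iUnion.2 ⟨j, hj.2⟩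
    calc μ _ ≤ μ (⋃ k : Fin K, {ω | P k ω ≤ (0:ℝ)}) := measure_mono hsub
    _ ≤ ∑' k : Fin K, μ {ω | P k ω ≤ (0:ℝ)} := measure_iUnion_le _
    _ = 0 := by simp [hP0]
    _ ≤ ENNReal.ofReal α := zero_le
  · -- 0 < α < 1
    have hKR : (0:ℝ) < (K:ℝ) := by exact_mod_cast hK
    have hXm : Measurable (fun ω => (fun j => P j ω)) := measurable_pi_lambda _ hP
    set E1 : Set Ω := {ω | 1 ≤ bhCount K α (fun j => P j ω)} with hE1
    have hSE : {ω | simes K (fun j => P j ω) ≤ α} = E1 := by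
      ext ω
      exact simes_le_iff hK α _
    rw [hSE]
    set D : ℕ → Set Ω := fun r => {ω | bhCount K α (fun j => P j ω) = r} with hDdef
    have hDm : ∀ r, 1 ≤ r → MeasurableSet (D r) := by
      intro r hr
      have : D r = (fun ω => (fun j => P j ω)) ⁻¹'
          ({x | r ≤ bhCount K α x} \ {x | r + 1 ≤ bhCount K α x}) := by
        ext ω
        simp only [hDdef, Set.mem_setOf_eq, Set.mem_preimage, Set.mem_diff, not_le]
        omega
      rw [this]
      exact hXm ((measurableSet_le_bhCount hK hr α).diff
        (measurableSet_le_bhCount hK (by omega) α))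
    have hdec : E1 = ⋃ r ∈ Finset.Icc 1 K, D r := by
      ext ω
      simp only [hE1, hDdef, Set.mem_setOf_eq, Set.mem_iUnion, Finset.mem_Icc]
      have hle := bhCount_le α (fun j => P j ω)
      constructor
      · intro h
        exact ⟨bhCount K α _, ⟨h, hle⟩, rfl⟩
      · rintro ⟨r, ⟨hr1, _⟩, h2⟩
        omega
    have hμdec : μ E1 = ∑ r ∈ Finset.Icc 1 K, μ (D r) := by
      rw [hdec]
      apply measure_biUnion_finset ?_ (fun r hr => hDm r (Finset.mem_Icc.1 hr).1)
      intro r hr s hs hrs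
      rw [Function.onFun, Set.disjoint_left]
      intro ω hω1 hω2
      simp only [hDdef, Set.mem_setOf_eq] at hω1 hω2
      omega
    have hcount : ∀ r ∈ Finset.Icc 1 K, (μ (D r)).toReal
        ≤ ∑ k : Fin K, (1 / r : ℝ) * (μ ({ω | P k ω ≤ α * r / K} ∩ D r)).toReal := by
      intro r hr
      rw [Finset.mem_Icc] at hr
      have hb := count_bound μ hK P hP α hr.1 (hDm r hr.1) (fun ω hω => hω)
      have hrpos : (0:ℝ) < (r:ℝ) := by exact_mod_cast hr.1
      have htop : (∑ k : Fin K, μ ({ω | P k ω ≤ α * r / K} ∩ D r)) ≠ ⊤ :=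
        ENNReal.sum_ne_top.2 fun k _ => measure_ne_top μ _
      have h1 := ENNReal.toReal_mono htop hb
      rw [ENNReal.toReal_mul, ENNReal.toReal_natCast,
        ENNReal.toReal_sum (fun k _ => measure_ne_top μ _)] at h1
      rw [← Finset.mul_sum]
      rw [one_div, ← div_eq_inv_mul, le_div_iff₀ hrpos, mul_comm]
      exact h1
    have hfinal : (μ E1).toReal ≤ α := by
      rw [hμdec, ENNReal.toReal_sum (fun r _ => measure_ne_top μ _)]
      calc ∑ r ∈ Finset.Icc 1 K, (μ (D r)).toReal
          ≤ ∑ r ∈ Finset.Icc 1 K, ∑ k : Fin K,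
            (1 / r : ℝ) * (μ ({ω | P k ω ≤ α * r / K} ∩ D r)).toReal :=
            Finset.sum_le_sum hcount
      _ = ∑ k : Fin K, ∑ r ∈ Finset.Icc 1 K,
            (1 / r : ℝ) * (μ ({ω | P k ω ≤ α * r / K} ∩ D r)).toReal :=
            Finset.sum_comm
      _ ≤ ∑ _k : Fin K, α / K :=
            Finset.sum_le_sum (fun k _ =>
              per_k_bound μ hK P hP h_pvar h_prds h0 h1 k)
      _ = α := by
            rw [Finset.sum_const, Finset.card_univ, Fintype.card_fin, nsmul_eq_mul]
            field_simp
    calc μ E1 = ENNReal.ofReal ((μ E1).toReal) :=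
          (ENNReal.ofReal_toReal (measure_ne_top μ _)).symm
    _ ≤ ENNReal.ofReal α := ENNReal.ofReal_le_ofReal hfinal
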